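/- If f₁ is holomorphic at a and f₂ is meromorphic with a pole of order m at a, then p.v._{z=a}(f₁(z)·f₂(z)) = Σ_{k=0}^{m} (f₁^{(k)}(a)/k!) · p.v._{z=a}((z−a)^k · f₂(z)). -/

import Mathlib

open Filter Topology Complex

/-- The principal value of `f` at `a`:
`p.v._{z=a} f = lim_{ρ→0⁺} (2πi)⁻¹ ∮_{|z-a|=ρ} f z/(z-a) dz`, i.e. the constant
term of the Laurent expansion of `f` at `a` (equivalently `res_{z=a} (f z/(z-a))`). -/
noncomputable def pv (f : ℂ → ℂ) (a : ℂ) : ℂ :=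
  limUnder (𝓝[>] (0 : ℝ))
    (fun ρ : ℝ => (2 * Real.pi * I)⁻¹ * ∮ z in C(a, ρ), f z / (z - a))

/-- If the normalized circle integrals are eventually constant, then `pv` equals
that constant. -/
lemma pv_eq {F : ℂ → ℂ} {a : ℂ} {v : ℂ} {r : ℝ} (hr : 0 < r)
    (h : ∀ ρ : ℝ, 0 < ρ → ρ < r →
      (2 * Real.pi * I)⁻¹ * (∮ z in C(a, ρ), F z / (z - a)) = v) : pv F a = v := by
  refine Filter.Tendsto.limUnder_eq ?_
  refine Filter.Tendsto.congr' ?_ tendsto_const_nhds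
  filter_upwards [Ioo_mem_nhdsGT_of_mem ⟨le_refl (0 : ℝ), hr⟩] with ρ hρ
  exact (h ρ hρ.1 hρ.2).symm

lemma circleIntegrable_finset_sum {ι : Type*} (s : Finset ι) {e : ι → ℂ → ℂ} {a : ℂ} {ρ : ℝ}
    (h : ∀ i ∈ s, CircleIntegrable (e i) a ρ) :
    CircleIntegrable (fun z => ∑ i ∈ s, e i z) a ρ := by
  classical
  induction s using Finset.induction_on with
  | empty => simpa using circleIntegrable_const (0 : ℂ) a ρ
  | @insert i s hni ih =>
    simp only [Finset.sum_insert hni]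
    exact (h i (Finset.mem_insert_self i s)).add
      (ih fun j hj => h j (Finset.mem_insert_of_mem hj))

lemma circleIntegral_add' {f g : ℂ → ℂ} {c : ℂ} {R : ℝ} (hf : CircleIntegrable f c R)
    (hg : CircleIntegrable g c R) :
    (∮ z in C(c, R), (f z + g z)) = (∮ z in C(c, R), f z) + ∮ z in C(c, R), g z := by
  simp only [circleIntegral, smul_add, intervalIntegral.integral_add hf.out hg.out]

lemma circleIntegral_finset_sum {ι : Type*} (s : Finset ι) {e : ι → ℂ → ℂ} {a : ℂ} {ρ : ℝ}
    (h : ∀ i ∈ s, CircleIntegrable (e i) a ρ) :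
    (∮ z in C(a, ρ), ∑ i ∈ s, e i z) = ∑ i ∈ s, ∮ z in C(a, ρ), e i z := by
  classical
  induction s using Finset.induction_on with
  | empty => simp [circleIntegral]
  | @insert i s hni ih =>
    simp only [Finset.sum_insert hni]
    rw [circleIntegral_add' (h i (Finset.mem_insert_self i s))
        (circleIntegrable_finset_sum s fun j hj => h j (Finset.mem_insert_of_mem hj)),
      ih fun j hj => h j (Finset.mem_insert_of_mem hj)]

lemma sphere_sub_ne_zero {a : ℂ} {ρ : ℝ} (hρ : 0 < ρ) {z : ℂ} (hz : z ∈ Metric.sphere a ρ) :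
    z - a ≠ 0 := by
  rw [sub_ne_zero]
  rintro rfl
  rw [Metric.mem_sphere, dist_self] at hz
  exact hρ.ne hz

/-- Main decomposition of the circle integral defining `pv`. -/
lemma circleIntegral_decomp (a : ℂ) {ρ : ℝ} (hρ : 0 < ρ) (h F : ℂ → ℂ) {m : ℕ} (e : ℕ → ℂ → ℂ)
    (hd : DiffContOnCl ℂ h (Metric.ball a ρ))
    (hint : ∀ j ∈ Finset.Icc 1 m, CircleIntegrable (e j) a ρ)
    (hF : ∀ z ∈ Metric.sphere a ρ, F z / (z - a) = h z / (z - a) + ∑ j ∈ Finset.Icc 1 m, e j z) :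
    (∮ z in C(a, ρ), F z / (z - a)) =
      2 * Real.pi * I * h a + ∑ j ∈ Finset.Icc 1 m, ∮ z in C(a, ρ), e j z := by
  have hcont : ContinuousOn (fun z => h z / (z - a)) (Metric.sphere a ρ) := by
    apply ContinuousOn.div
    · exact hd.continuousOn_ball.mono Metric.sphere_subset_closedBall
    · exact (continuous_id.sub continuous_const).continuousOn
    · exact fun z hz => sphere_sub_ne_zero hρ hz
  have h1 : CircleIntegrable (fun z => h z / (z - a)) a ρ := hcont.circleIntegrable hρ.le
  have h2 : CircleIntegrable (fun z => ∑ j ∈ Finset.Icc 1 m, e j z) a ρ :=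
    circleIntegrable_finset_sum _ hint
  have hCauchy : (∮ z in C(a, ρ), h z / (z - a)) = 2 * Real.pi * I * h a := by
    have := hd.circleIntegral_sub_inv_smul (Metric.mem_ball_self hρ)
    simpa [smul_eq_mul, div_eq_inv_mul, mul_comm, mul_assoc, mul_left_comm] using this
  calc (∮ z in C(a, ρ), F z / (z - a))
      = ∮ z in C(a, ρ), (h z / (z - a) + ∑ j ∈ Finset.Icc 1 m, e j z) :=
        circleIntegral.integral_congr hρ.le fun z hz => hF z hz
    _ = (∮ z in C(a, ρ), h z / (z - a)) + ∮ z in C(a, ρ), ∑ j ∈ Finset.Icc 1 m, e j z :=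
        circleIntegral_add' h1 h2
    _ = 2 * Real.pi * I * h a + ∑ j ∈ Finset.Icc 1 m, ∮ z in C(a, ρ), e j z := by
        rw [hCauchy, circleIntegral_finset_sum _ hint]

/-- If `f₁` is holomorphic at `a` and `f₂` is meromorphic with a pole of order `m`
at `a` (i.e. `f₂ z = g z + ∑_{j=1}^m c j/(z-a)^j` with `g` holomorphic at `a` and
`c m ≠ 0`), then
`p.v.(f₁·f₂) = ∑_{k=0}^{m} (f₁^{(k)}(a)/k!) p.v.((z-a)^k f₂)`. -/
theorem pv_mul_pole_order_m (f₁ f₂ g : ℂ → ℂ) (a : ℂ) (m : ℕ) (c : ℕ → ℂ)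
    (hf₁ : AnalyticAt ℂ f₁ a) (hg : AnalyticAt ℂ g a) (hm : c m ≠ 0)
    (hf₂ : ∀ z ≠ a, f₂ z = g z + ∑ j ∈ Finset.Icc 1 m, c j / (z - a) ^ j) :
    pv (fun z => f₁ z * f₂ z) a =
      ∑ k ∈ Finset.range (m + 1),
        (iteratedDeriv k f₁ a / (k.factorial : ℂ)) * pv (fun z => (z - a) ^ k * f₂ z) a := by
  classical
  obtain ⟨ε, hε, hball⟩ := Metric.eventually_nhds_iff.1
    (hf₁.eventually_analyticAt.and hg.eventually_analyticAt)
  set r : ℝ := ε / 2 with hrdef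
  have hr : 0 < r := by positivity
  have hmem : ∀ z ∈ Metric.closedBall a r, AnalyticAt ℂ f₁ z ∧ AnalyticAt ℂ g z := by
    intro z hz
    exact hball (lt_of_le_of_lt (Metric.mem_closedBall.1 hz) (by rw [hrdef]; linarith))
  have hdf₁ : DifferentiableOn ℂ f₁ (Metric.closedBall a r) := fun z hz =>
    ((hmem z hz).1.differentiableAt).differentiableWithinAt
  have hdg : DifferentiableOn ℂ g (Metric.closedBall a r) := fun z hz =>
    ((hmem z hz).2.differentiableAt).differentiableWithinAt
  -- Fact 1 : `pv ((z-a)^k f₂) = if k = 0 then g a else c k` for `k ≤ m`.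
  have fact1 : ∀ k : ℕ, k ≤ m →
      pv (fun z => (z - a) ^ k * f₂ z) a = if k = 0 then g a else c k := by
    intro k hk
    apply pv_eq hr
    intro ρ hρ hρr
    have hsubc : Metric.closedBall a ρ ⊆ Metric.closedBall a r :=
      Metric.closedBall_subset_closedBall hρr.le
    have hdh : DifferentiableOn ℂ (fun z => (z - a) ^ k * g z) (Metric.closedBall a r) :=
      (((differentiable_id.sub_const a).pow k).differentiableOn).mul hdg
    have hd : DiffContOnCl ℂ (fun z => (z - a) ^ k * g z) (Metric.ball a ρ) := by
      refine ⟨hdh.mono (Metric.ball_subset_closedBall.trans hsubc), ?_⟩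
      exact hdh.continuousOn.mono (Metric.closure_ball_subset_closedBall.trans hsubc)
    have hint : ∀ j ∈ Finset.Icc 1 m,
        CircleIntegrable (fun z => c j * (z - a) ^ ((k : ℤ) - j - 1)) a ρ := by
      intro j _
      refine (ContinuousOn.circleIntegrable hρ.le ?_)
      refine continuousOn_const.mul (ContinuousOn.zpow₀
        ((continuous_id.sub continuous_const).continuousOn) _ fun z hz =>
        Or.inl (sphere_sub_ne_zero hρ hz))
    have hF : ∀ z ∈ Metric.sphere a ρ, ((z - a) ^ k * f₂ z) / (z - a) =
        ((z - a) ^ k * g z) / (z - a) +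
          ∑ j ∈ Finset.Icc 1 m, c j * (z - a) ^ ((k : ℤ) - j - 1) := by
      intro z hz
      have hw : z - a ≠ 0 := sphere_sub_ne_zero hρ hz
      have hza : z ≠ a := by simpa [sub_ne_zero] using hw
      rw [hf₂ z hza, mul_add, add_div]
      congr 1
      rw [Finset.mul_sum, Finset.sum_div]
      refine Finset.sum_congr rfl fun j _ => ?_
      have hexp : ((k : ℤ) - j - 1) = (k : ℤ) + (-(j : ℤ)) + (-1) := by ring
      rw [hexp, zpow_add₀ hw, zpow_add₀ hw, zpow_neg, zpow_neg_one, zpow_natCast, zpow_natCast]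
      field_simp
    rw [circleIntegral_decomp a hρ _ _ _ hd hint hF]
    have hterm : ∀ j ∈ Finset.Icc 1 m,
        (∮ z in C(a, ρ), c j * (z - a) ^ ((k : ℤ) - j - 1)) =
          if j = k then 2 * Real.pi * I * c k else 0 := by
      intro j hj
      rw [circleIntegral.integral_const_mul]
      by_cases hjk : j = k
      · subst hjk
        have : ((j : ℤ) - j - 1) = -1 := by ring
        rw [this]
        simp only [zpow_neg_one]
        rw [circleIntegral.integral_sub_inv_of_mem_ball (Metric.mem_ball_self hρ)]
        simp [mul_comm]
      · rw [circleIntegral.integral_sub_zpow_of_ne (by omega) a a ρ, mul_zero, if_neg hjk]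
    rw [Finset.sum_congr rfl hterm, Finset.sum_ite_eq' (Finset.Icc 1 m) k
      (fun _ => 2 * Real.pi * I * c k)]
    by_cases hk0 : k = 0
    · subst hk0
      have hni : (0 : ℕ) ∉ Finset.Icc 1 m := by simp
      rw [if_pos rfl, if_neg hni, add_zero, sub_self, pow_zero, one_mul,
        inv_mul_cancel_left₀ two_pi_I_ne_zero]
    · have hmem' : k ∈ Finset.Icc 1 m := Finset.mem_Icc.2 ⟨Nat.one_le_iff_ne_zero.2 hk0, hk⟩
      rw [if_neg hk0, if_pos hmem', sub_self, zero_pow hk0, zero_mul, mul_zero, zero_add,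
        inv_mul_cancel_left₀ two_pi_I_ne_zero]
  -- Fact 2 : `pv (f₁ f₂) = f₁ a * g a + ∑ c j * (f₁^{(j)}(a)/j!)`.
  have fact2 : pv (fun z => f₁ z * f₂ z) a = f₁ a * g a +
      ∑ j ∈ Finset.Icc 1 m, c j * (iteratedDeriv j f₁ a / (j.factorial : ℂ)) := by
    apply pv_eq hr
    intro ρ hρ hρr
    obtain ⟨R, rfl⟩ : ∃ R : NNReal, ρ = (R : ℝ) := ⟨⟨ρ, hρ.le⟩, rfl⟩
    have hRpos : 0 < R := by exact_mod_cast hρ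
    have hsubc : Metric.closedBall a (R : ℝ) ⊆ Metric.closedBall a r :=
      Metric.closedBall_subset_closedBall hρr.le
    have hp : HasFPowerSeriesOnBall f₁ (cauchyPowerSeries f₁ a R) a R :=
      (hdf₁.mono hsubc).hasFPowerSeriesOnBall hRpos
    have hcoeff : ∀ j : ℕ, (cauchyPowerSeries f₁ a (R : ℝ) j fun _ => (1 : ℂ)) =
        iteratedDeriv j f₁ a / (j.factorial : ℂ) := by
      intro j
      have h1 := hp.factorial_smul (1 : ℂ) j
      rw [iteratedDeriv_eq_iteratedFDeriv, ← h1, nsmul_eq_mul]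
      have : ((j.factorial : ℂ)) ≠ 0 := Nat.cast_ne_zero.2 j.factorial_ne_zero
      field_simp
    have hcirc : ∀ j : ℕ,
        (∮ z in C(a, (R : ℝ)), (1 / (z - a)) ^ j • ((z - a)⁻¹ • f₁ z)) =
          2 * Real.pi * I * (iteratedDeriv j f₁ a / (j.factorial : ℂ)) := by
      intro j
      have h2 := cauchyPowerSeries_apply f₁ a (R : ℝ) j 1
      rw [hcoeff j, smul_eq_mul] at h2
      rw [h2, mul_inv_cancel_left₀ two_pi_I_ne_zero]
    have hcf₁ : ContinuousOn f₁ (Metric.sphere a (R : ℝ)) :=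
      (hdf₁.continuousOn).mono (Metric.sphere_subset_closedBall.trans hsubc)
    have hdh : DifferentiableOn ℂ (fun z => f₁ z * g z) (Metric.closedBall a r) := hdf₁.mul hdg
    have hd : DiffContOnCl ℂ (fun z => f₁ z * g z) (Metric.ball a (R : ℝ)) := by
      refine ⟨hdh.mono (Metric.ball_subset_closedBall.trans hsubc), ?_⟩
      exact hdh.continuousOn.mono (Metric.closure_ball_subset_closedBall.trans hsubc)
    have hint : ∀ j ∈ Finset.Icc 1 m,
        CircleIntegrable (fun z => c j * ((1 / (z - a)) ^ j • ((z - a)⁻¹ • f₁ z))) a (R : ℝ) := by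
      intro j _
      refine ContinuousOn.circleIntegrable hρ.le ?_
      simp only [smul_eq_mul]
      refine continuousOn_const.mul (ContinuousOn.mul (ContinuousOn.pow ?_ j)
        (ContinuousOn.mul ?_ hcf₁))
      · exact ContinuousOn.div continuousOn_const
          ((continuous_id.sub continuous_const).continuousOn)
          (fun z hz => sphere_sub_ne_zero hρ hz)
      · exact ContinuousOn.inv₀ ((continuous_id.sub continuous_const).continuousOn)
          (fun z hz => sphere_sub_ne_zero hρ hz)
    have hF : ∀ z ∈ Metric.sphere a (R : ℝ), (f₁ z * f₂ z) / (z - a) =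
        (f₁ z * g z) / (z - a) +
          ∑ j ∈ Finset.Icc 1 m, c j * ((1 / (z - a)) ^ j • ((z - a)⁻¹ • f₁ z)) := by
      intro z hz
      have hw : z - a ≠ 0 := sphere_sub_ne_zero hρ hz
      have hza : z ≠ a := by simpa [sub_ne_zero] using hw
      rw [hf₂ z hza, mul_add, add_div]
      congr 1
      rw [Finset.mul_sum, Finset.sum_div]
      refine Finset.sum_congr rfl fun j _ => ?_
      simp only [smul_eq_mul]
      field_simp
      rw [mul_assoc, ← mul_pow, mul_one_div_cancel hw, one_pow, mul_one]
    rw [circleIntegral_decomp a hρ _ _ _ hd hint hF]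
    have hsum : ∑ j ∈ Finset.Icc 1 m,
        (∮ z in C(a, (R : ℝ)), c j * ((1 / (z - a)) ^ j • ((z - a)⁻¹ • f₁ z))) =
          2 * Real.pi * I *
            ∑ j ∈ Finset.Icc 1 m, c j * (iteratedDeriv j f₁ a / (j.factorial : ℂ)) := by
      rw [Finset.mul_sum]
      refine Finset.sum_congr rfl fun j _ => ?_
      rw [circleIntegral.integral_const_mul, hcirc j]
      ring
    rw [hsum, ← mul_add, inv_mul_cancel_left₀ two_pi_I_ne_zero]
  -- Assemble.
  rw [fact2, Finset.sum_range_succ']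
  have h0 : (iteratedDeriv 0 f₁ a / ((0 : ℕ).factorial : ℂ)) *
      pv (fun z => (z - a) ^ 0 * f₂ z) a = f₁ a * g a := by
    rw [fact1 0 (Nat.zero_le m), if_pos rfl]
    simp [iteratedDeriv_zero]
  rw [h0]
  have hrest : ∑ i ∈ Finset.range m,
      (iteratedDeriv (i + 1) f₁ a / ((i + 1).factorial : ℂ)) *
        pv (fun z => (z - a) ^ (i + 1) * f₂ z) a =
      ∑ j ∈ Finset.Icc 1 m, c j * (iteratedDeriv j f₁ a / (j.factorial : ℂ)) := by
    rw [← Finset.Ico_add_one_right_eq_Icc, Finset.sum_Ico_eq_sum_range]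
    refine Finset.sum_congr rfl fun i hi => ?_
    have him : i + 1 ≤ m := by
      have := Finset.mem_range.1 hi; omega
    rw [Nat.add_comm 1 i, fact1 (i + 1) him, if_neg (Nat.succ_ne_zero i)]
    ring
  rw [hrest, add_comm]
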